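/- Under the setup described in the context, for all pairwise distinct x, y, z ∈ S'∖{e}, b_{xy}(z) ≠ 0. -/

import Mathlib

open Projectivization
open Module Submodule
set_option linter.unusedSectionVars false

abbrev Pt (F : Type) [Field F] : Type := Projectivization F (Fin 3 → F)

def IsLine (F : Type) [Field F] (W : Submodule F (Fin 3 → F)) : Prop :=
  Module.finrank F W = 2

noncomputable def secantCount (F : Type) [Field F] (S : Set (Pt F))
    (W : Submodule F (Fin 3 → F)) : ℕ :=
  {p ∈ S | p.submodule ≤ W}.ncard

noncomputable def oddSecants (F : Type) [Field F] (S : Set (Pt F)) : ℕ :=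
  {W : Submodule F (Fin 3 → F) | IsLine F W ∧ Odd (secantCount F S W)}.ncard

noncomputable def linesThroughWithCount (F : Type) [Field F] (S : Set (Pt F))
    (x : Pt F) (i : ℕ) : ℕ :=
  {W : Submodule F (Fin 3 → F) | IsLine F W ∧ x.submodule ≤ W ∧ secantCount F S W = i}.ncard

noncomputable def S43 (F : Type) [Field F] [Fintype F] (S : Set (Pt F)) : Set (Pt F) :=
  {x ∈ S | linesThroughWithCount F S x 1 = 1 ∧ linesThroughWithCount F S x 3 = 1 ∧
    linesThroughWithCount F S x 2 = Fintype.card F - 1}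


variable {F : Type} [Field F] [Fintype F]

lemma point_le_iff (p : Pt F) (W : Submodule F (Fin 3 → F)) :
    p.submodule ≤ W ↔ p.rep ∈ W := by
  rw [Projectivization.submodule_eq, Submodule.span_singleton_le_iff_mem]

lemma sup_eq_span (p q : Pt F) :
    p.submodule ⊔ q.submodule = span F {p.rep, q.rep} := by
  rw [Projectivization.submodule_eq, Projectivization.submodule_eq,
    ← Submodule.span_union, Set.singleton_union]

lemma rep_li_pair {p q : Pt F} (h : p ≠ q) :
    LinearIndependent F ![p.rep, q.rep] := by
  rw [LinearIndependent.pair_iff]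
  intro s t hst
  by_contra hc
  push_neg at hc
  rcases eq_or_ne s 0 with hs | hs
  · subst hs
    simp only [zero_smul, zero_add, smul_eq_zero] at hst
    rcases hst with h1 | h1
    · exact (hc rfl) h1
    · exact q.rep_nonzero h1
  · apply h
    have hpq : (-s⁻¹ * t) • q.rep = p.rep := by
      have h2 : t • q.rep = -(s • p.rep) := by
        rw [eq_neg_iff_add_eq_zero, add_comm]; exact hst
      rw [mul_smul, h2, smul_neg, neg_smul, neg_neg, ← mul_smul,
        inv_mul_cancel₀ hs, one_smul]
    rw [← p.mk_rep, ← q.mk_rep]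
    rw [Projectivization.mk_eq_mk_iff']
    exact ⟨_, hpq⟩


lemma finite_submodules : Finite (Submodule F (Fin 3 → F)) :=
  Finite.of_injective (fun W => (W : Set (Fin 3 → F))) SetLike.coe_injective


lemma finrank_sup_eq_two {p q : Pt F} (h : p ≠ q) :
    finrank F ↥(p.submodule ⊔ q.submodule) = 2 := by
  rw [sup_eq_span]
  have hli := rep_li_pair h
  have h2 := finrank_span_eq_card hli
  have hr : Set.range ![p.rep, q.rep] = {p.rep, q.rep} := by
    simp [Matrix.range_cons, Matrix.range_empty, Set.pair_comm]
  rw [hr] at h2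
  rw [h2]
  simp


-- new material
lemma finrank_ker_eq_two {φ : (Fin 3 → F) →ₗ[F] F} (hφ : φ ≠ 0) :
    finrank F ↥(LinearMap.ker φ) = 2 := by
  have h1 := LinearMap.finrank_range_add_finrank_ker φ
  have h2 : LinearMap.range φ = ⊤ := by
    rcases DFunLike.ne_iff.1 hφ with ⟨v, hv⟩
    simp only [LinearMap.zero_apply] at hv
    rw [eq_top_iff]
    intro t _
    exact ⟨(t / φ v) • v, by simp [map_smul, div_mul_cancel₀, hv]⟩
  rw [h2] at h1
  simp only [finrank_top] at h1
  have h3 : finrank F (Fin 3 → F) = 3 := by simp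
  have h4 : finrank F F = 1 := finrank_self F
  omega

lemma line_eq_of_le {W₁ W₂ : Submodule F (Fin 3 → F)} (h1 : IsLine F W₁)
    (h2 : IsLine F W₂) (h : W₁ ≤ W₂) : W₁ = W₂ :=
  Submodule.eq_of_le_of_finrank_le h (by rw [h1, h2])

lemma eval_ne_zero {S : Set (Pt F)} {a b : Pt F} {φ : (Fin 3 → F) →ₗ[F] F}
    (hφ : φ ≠ 0) (haφ : a.submodule ≤ LinearMap.ker φ) {k : ℕ}
    (hk : secantCount F S (LinearMap.ker φ) = k)
    (h2 : secantCount F S (a.submodule ⊔ b.submodule) = 2)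
    (hab : a ≠ b) (hk2 : k ≠ 2) : φ b.rep ≠ 0 := by
  intro h0
  have hb : b.submodule ≤ LinearMap.ker φ := (point_le_iff _ _).2 h0
  have hle : a.submodule ⊔ b.submodule ≤ LinearMap.ker φ := sup_le haφ hb
  have heq : a.submodule ⊔ b.submodule = LinearMap.ker φ :=
    line_eq_of_le (finrank_sup_eq_two hab) (finrank_ker_eq_two hφ) hle
  rw [heq, hk] at h2
  exact hk2 h2

lemma secant_set_finite (S : Set (Pt F)) (hS : S.Finite) (W : Submodule F (Fin 3 → F)) :
    {p ∈ S | p.submodule ≤ W}.Finite := hS.subset (Set.sep_subset _ _)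

lemma third_not_on_line {S : Set (Pt F)} (hSfin : S.Finite) {a b c : Pt F}
    (ha : a ∈ S) (hb : b ∈ S) (hc : c ∈ S)
    (hab : a ≠ b) (hac : a ≠ c) (hbc : b ≠ c)
    (h2 : secantCount F S (a.submodule ⊔ b.submodule) = 2) :
    ¬ c.submodule ≤ a.submodule ⊔ b.submodule := by
  intro hle
  have hsub : {a, b, c} ⊆ {p ∈ S | p.submodule ≤ a.submodule ⊔ b.submodule} := by
    intro p hp
    rcases hp with rfl | rfl | rfl
    · exact ⟨ha, le_sup_left⟩
    · exact ⟨hb, le_sup_right⟩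
    · exact ⟨hc, hle⟩
  have h3 : ({a, b, c} : Set (Pt F)).ncard = 3 :=
    Set.ncard_eq_three.2 ⟨a, b, c, hab, hac, hbc, rfl⟩
  have hle3 : 3 ≤ {p ∈ S | p.submodule ≤ a.submodule ⊔ b.submodule}.ncard := by
    exact le_trans (le_of_eq h3.symm) (Set.ncard_le_ncard hsub (secant_set_finite S hSfin _))
  have hrfl : secantCount F S (a.submodule ⊔ b.submodule)
      = {p ∈ S | p.submodule ≤ a.submodule ⊔ b.submodule}.ncard := rfl
  omega

lemma rep_li_triple {a b c : Pt F}
    (hc : ¬ c.submodule ≤ a.submodule ⊔ b.submodule) (hab : a ≠ b) :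
    LinearIndependent F ![a.rep, b.rep, c.rep] := by
  have hsnoc : ![a.rep, b.rep, c.rep] = Fin.snoc ![a.rep, b.rep] c.rep := by
    ext i : 1
    fin_cases i <;> rfl
  rw [hsnoc, linearIndependent_fin_snoc]
  constructor
  · exact rep_li_pair hab
  · intro hmem
    apply hc
    rw [point_le_iff, sup_eq_span]
    have hr : Set.range ![a.rep, b.rep] = {a.rep, b.rep} := by
      simp [Matrix.range_cons, Matrix.range_empty, Set.pair_comm]
    rw [hr] at hmem
    exact hmem

lemma one_le_secant {S : Set (Pt F)} (hSfin : S.Finite) {a : Pt F} (haS : a ∈ S)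
    {W : Submodule F (Fin 3 → F)} (haW : a.submodule ≤ W) :
    1 ≤ secantCount F S W := by
  have : 0 < {p ∈ S | p.submodule ≤ W}.ncard :=
    (Set.ncard_pos (secant_set_finite S hSfin W)).2 ⟨a, Set.mem_sep haS haW⟩
  exact this

lemma line_through_classify
    (S : Set (Pt F)) (hSfin : S.Finite) (hS : S.ncard = Fintype.card F + 2)
    (a : Pt F) (haS : a ∈ S)
    (h1 : {W | IsLine F W ∧ a.submodule ≤ W ∧ secantCount F S W = 1}.ncard = 1)
    (h3 : {W | IsLine F W ∧ a.submodule ≤ W ∧ secantCount F S W = 3}.ncard = 1)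
    (h2 : {W | IsLine F W ∧ a.submodule ≤ W ∧ secantCount F S W = 2}.ncard
      = Fintype.card F - 1)
    (Wt Wg W : Submodule F (Fin 3 → F))
    (hWt : IsLine F Wt ∧ a.submodule ≤ Wt ∧ secantCount F S Wt = 1)
    (hWg : IsLine F Wg ∧ a.submodule ≤ Wg ∧ secantCount F S Wg = 3)
    (hW : IsLine F W) (haW : a.submodule ≤ W) (hWWt : W ≠ Wt) (hWWg : W ≠ Wg) :
    secantCount F S W = 2 := by
  haveI : Finite (Submodule F (Fin 3 → F)) := finite_submodules
  classical
  set q := Fintype.card F with hq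
  have hq1 : 1 ≤ q := Fintype.card_pos
  -- the finsets
  set s : Finset (Pt F) := (hSfin.diff (t := {a})).toFinset with hs_def
  have hLfin : {V : Submodule F (Fin 3 → F) | IsLine F V ∧ a.submodule ≤ V}.Finite :=
    Set.toFinite _
  set t : Finset (Submodule F (Fin 3 → F)) := hLfin.toFinset with ht_def
  have hts : ∀ V, V ∈ t ↔ IsLine F V ∧ a.submodule ≤ V := by
    intro V; rw [ht_def, Set.Finite.mem_toFinset]; rfl
  have hss : ∀ p, p ∈ s ↔ p ∈ S ∧ p ≠ a := by
    intro p; rw [hs_def, Set.Finite.mem_toFinset]; simp [Set.mem_diff]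
  -- the fibration map
  have hmaps : ∀ p ∈ s, a.submodule ⊔ p.submodule ∈ t := by
    intro p hp
    rw [hss] at hp
    rw [hts]
    exact ⟨finrank_sup_eq_two (fun h => hp.2 h.symm), le_sup_left⟩
  have hsum : s.card = ∑ V ∈ t, (s.filter (fun p => a.submodule ⊔ p.submodule = V)).card :=
    Finset.card_eq_sum_card_fiberwise hmaps
  -- card of s
  have hscard : s.card = q + 1 := by
    have h' : s.card = (S \ {a}).ncard :=
      (Set.ncard_eq_toFinset_card _ (hSfin.diff (t := {a}))).symm
    rw [h', Set.ncard_diff_singleton_of_mem haS, hS]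
    omega
  -- fibers have cardinality secantCount - 1
  have hfiber : ∀ V ∈ t, (s.filter (fun p => a.submodule ⊔ p.submodule = V)).card
      = secantCount F S V - 1 := by
    intro V hV
    rw [hts] at hV
    have hset : ↑(s.filter (fun p => a.submodule ⊔ p.submodule = V))
        = {p ∈ S | p.submodule ≤ V} \ {a} := by
      ext p
      simp only [Finset.coe_filter, Set.mem_setOf_eq, Set.mem_diff, Set.mem_setOf_eq,
        Set.mem_singleton_iff, hss]
      constructor
      · rintro ⟨⟨hpS, hpa⟩, hsup⟩
        exact ⟨⟨hpS, le_trans le_sup_right (le_of_eq hsup)⟩, hpa⟩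
      · rintro ⟨⟨hpS, hpV⟩, hpa⟩
        refine ⟨⟨hpS, hpa⟩, ?_⟩
        exact line_eq_of_le (finrank_sup_eq_two (fun h => hpa h.symm)) hV.1
          (sup_le hV.2 hpV)
    have : (s.filter (fun p => a.submodule ⊔ p.submodule = V)).card
        = ({p ∈ S | p.submodule ≤ V} \ {a}).ncard := by
      rw [← hset, Set.ncard_coe_finset]
    rw [this, Set.ncard_diff_singleton_of_mem (Set.mem_sep haS hV.2)]
    rfl
  -- identify class finsets with the hypothesis sets
  have hclass : ∀ k : ℕ, ↑(t.filter (fun V => secantCount F S V = k))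
      = {V | IsLine F V ∧ a.submodule ≤ V ∧ secantCount F S V = k} := by
    intro k
    ext V
    simp only [Finset.coe_filter, Set.mem_setOf_eq, hts]
    tauto
  have hcard1 : (t.filter (fun V => secantCount F S V = 1)).card = 1 := by
    rw [← Set.ncard_coe_finset, hclass 1, h1]
  have hcard3 : (t.filter (fun V => secantCount F S V = 3)).card = 1 := by
    rw [← Set.ncard_coe_finset, hclass 3, h3]
  have hcard2 : (t.filter (fun V => secantCount F S V = 2)).card = q - 1 := by
    rw [← Set.ncard_coe_finset, hclass 2, h2]
  -- W has secant count ≥ 1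
  -- sum over t2 ∪ t3 already equals q + 1
  set t2 := t.filter (fun V => secantCount F S V = 2) with ht2
  set t3 := t.filter (fun V => secantCount F S V = 3) with ht3
  have hdisj : Disjoint t2 t3 := by
    rw [Finset.disjoint_left]
    intro V hV2 hV3
    rw [ht2, Finset.mem_filter] at hV2
    rw [ht3, Finset.mem_filter] at hV3
    omega
  have hsub23 : t2 ∪ t3 ⊆ t := by
    intro V hV
    rcases Finset.mem_union.1 hV with h | h
    · exact Finset.mem_of_mem_filter V h
    · exact Finset.mem_of_mem_filter V h
  have hsum23 : ∑ V ∈ t2 ∪ t3, (secantCount F S V - 1) = q + 1 := by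
    rw [Finset.sum_union hdisj]
    have e2 : ∑ V ∈ t2, (secantCount F S V - 1) = t2.card := by
      have hc : ∀ V ∈ t2, secantCount F S V - 1 = 1 := fun V hV => by
        rw [(Finset.mem_filter.1 hV).2]
      rw [Finset.sum_congr rfl hc]
      simp
    have e3 : ∑ V ∈ t3, (secantCount F S V - 1) = t3.card * 2 := by
      have hc : ∀ V ∈ t3, secantCount F S V - 1 = 2 := fun V hV => by
        rw [(Finset.mem_filter.1 hV).2]
      rw [Finset.sum_congr rfl hc]
      simp [Finset.sum_const, smul_eq_mul]
    rw [e2, e3, hcard2, hcard3]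
    omega
  have htotal : ∑ V ∈ t, (secantCount F S V - 1) = q + 1 := by
    rw [← Finset.sum_congr rfl hfiber, ← hsum, hscard]
  have hrest : ∑ V ∈ t \ (t2 ∪ t3), (secantCount F S V - 1) = 0 := by
    have hsd := Finset.sum_sdiff (f := fun V => secantCount F S V - 1) hsub23
    omega
  -- now the endgame
  have hWt' : W ∉ ({V | IsLine F V ∧ a.submodule ≤ V ∧ secantCount F S V = 1}) := by
    intro hmem
    rcases Set.ncard_eq_one.1 h1 with ⟨U, hU⟩
    rw [hU] at hmem
    have : Wt ∈ ({U} : Set _) := by rw [← hU]; exact hWt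
    exact hWWt (hmem.trans this.symm)
  have hWg' : W ∉ ({V | IsLine F V ∧ a.submodule ≤ V ∧ secantCount F S V = 3}) := by
    intro hmem
    rcases Set.ncard_eq_one.1 h3 with ⟨U, hU⟩
    rw [hU] at hmem
    have : Wg ∈ ({U} : Set _) := by rw [← hU]; exact hWg
    exact hWWg (hmem.trans this.symm)
  have hWne1 : secantCount F S W ≠ 1 := fun h => hWt' ⟨hW, haW, h⟩
  have hWne3 : secantCount F S W ≠ 3 := fun h => hWg' ⟨hW, haW, h⟩
  by_contra hWne2
  have hWmem : W ∈ t \ (t2 ∪ t3) := by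
    rw [Finset.mem_sdiff, Finset.mem_union]
    refine ⟨(hts W).2 ⟨hW, haW⟩, ?_⟩
    rintro (h | h)
    · exact hWne2 (Finset.mem_filter.1 h).2
    · exact hWne3 (Finset.mem_filter.1 h).2
  have hzero : secantCount F S W - 1 = 0 :=
    (Finset.sum_eq_zero_iff).1 hrest W hWmem
  have hge := one_le_secant hSfin haS haW (W := W)
  omega
lemma repr_combo (B : Basis (Fin 3) F (Fin 3 → F)) (x y z : F) :
    B.repr (x • B 0 + y • B 1 + z • B 2)
      = Finsupp.single 0 x + Finsupp.single 1 y + Finsupp.single 2 z := by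
  simp [map_add, map_smul, Basis.repr_self, Finsupp.smul_single]

lemma repr_combo_apply (B : Basis (Fin 3) F (Fin 3 → F)) (x y z : F) (i : Fin 3) :
    B.repr (x • B 0 + y • B 1 + z • B 2) i = ![x, y, z] i := by
  rw [repr_combo]
  fin_cases i <;> simp [Finsupp.single_apply]

lemma decomp (B : Basis (Fin 3) F (Fin 3 → F)) (v : Fin 3 → F) :
    v = B.repr v 0 • B 0 + B.repr v 1 • B 1 + B.repr v 2 • B 2 := by
  have := B.sum_repr v
  rw [Fin.sum_univ_three] at this
  exact this.symm

lemma repr_eq_of_combo (B : Basis (Fin 3) F (Fin 3 → F)) (x y z : F) (v : Fin 3 → F)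
    (h : v = x • B 0 + y • B 1 + z • B 2) :
    B.repr v 0 = x ∧ B.repr v 1 = y ∧ B.repr v 2 = z := by
  subst h
  refine ⟨?_, ?_, ?_⟩ <;> simpa using repr_combo_apply B x y z _

lemma finrank_span_pair_two {u v : Fin 3 → F} (h : LinearIndependent F ![u, v]) :
    finrank F ↥(span F {u, v}) = 2 := by
  have h2 := finrank_span_eq_card h
  have hr : Set.range ![u, v] = {u, v} := by
    simp [Matrix.range_cons, Matrix.range_empty, Set.pair_comm]
  rw [hr] at h2
  rw [h2]
  simp

lemma prod_nonzero_eq_neg_one [DecidableEq F] :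
    ∏ m ∈ Finset.univ.erase (0 : F), m = -1 := by
  have h := FiniteField.prod_univ_units_id_eq_neg_one (K := F)
  have hb : ∏ m ∈ Finset.univ.erase (0 : F), m = ∏ u : Fˣ, (u : F) := by
    refine (Finset.prod_bij (fun (u : Fˣ) _ => (u : F)) ?_ ?_ ?_ ?_).symm
    · intro u _
      exact Finset.mem_erase.2 ⟨Units.ne_zero u, Finset.mem_univ _⟩
    · intro u _ u' _ huu
      exact Units.ext huu
    · intro m hm
      exact ⟨Units.mk0 m (Finset.mem_erase.1 hm).1, Finset.mem_univ _, rfl⟩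
    · intro u _
      rfl
  rw [hb, ← Units.coe_prod, h]
  simp

lemma pencil_prod
    (S : Set (Pt F)) (hSfin : S.Finite) (hS : S.ncard = Fintype.card F + 2)
    (a b c : Pt F) (haS : a ∈ S) (hbS : b ∈ S) (hcS : c ∈ S)
    (hab : a ≠ b) (hac : a ≠ c) (hbc : b ≠ c)
    (h1 : {W | IsLine F W ∧ a.submodule ≤ W ∧ secantCount F S W = 1}.ncard = 1)
    (h3 : {W | IsLine F W ∧ a.submodule ≤ W ∧ secantCount F S W = 3}.ncard = 1)
    (h2 : {W | IsLine F W ∧ a.submodule ≤ W ∧ secantCount F S W = 2}.ncard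
      = Fintype.card F - 1)
    (φ ψ : (Fin 3 → F) →ₗ[F] F)
    (hφ0 : φ ≠ 0) (haφ : a.submodule ≤ LinearMap.ker φ)
    (hφ1 : secantCount F S (LinearMap.ker φ) = 1)
    (hψ0 : ψ ≠ 0) (haψ : a.submodule ≤ LinearMap.ker ψ)
    (hψ3 : secantCount F S (LinearMap.ker ψ) = 3)
    (hbiab : secantCount F S (a.submodule ⊔ b.submodule) = 2)
    (hbiac : secantCount F S (a.submodule ⊔ c.submodule) = 2)
    (B : Basis (Fin 3) F (Fin 3 → F))
    (hB0 : B 0 = a.rep) (hB1 : B 1 = b.rep) (hB2 : B 2 = c.rep)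
    (T : Finset (Pt F)) (hT : ↑T = S \ ({a, b, c} : Set (Pt F))) :
    ∏ s ∈ T, (B.repr s.rep 2 / B.repr s.rep 1)
      = - (ψ b.rep * φ c.rep) / (ψ c.rep * φ b.rep) := by
  classical
  have hφb : φ b.rep ≠ 0 := eval_ne_zero hφ0 haφ hφ1 hbiab hab (by norm_num)
  have hφc : φ c.rep ≠ 0 := eval_ne_zero hφ0 haφ hφ1 hbiac hac (by norm_num)
  have hψb : ψ b.rep ≠ 0 := eval_ne_zero hψ0 haψ hψ3 hbiab hab (by norm_num)
  have hψc : ψ c.rep ≠ 0 := eval_ne_zero hψ0 haψ hψ3 hbiac hac (by norm_num)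
  obtain ⟨mT, hmT_def⟩ : ∃ mT : F, mT = -(φ b.rep) / φ c.rep := ⟨_, rfl⟩
  obtain ⟨mG, hmG_def⟩ : ∃ mG : F, mG = -(ψ b.rep) / ψ c.rep := ⟨_, rfl⟩
  have hmT0 : mT ≠ 0 := by rw [hmT_def]; exact div_ne_zero (neg_ne_zero.2 hφb) hφc
  have hmG0 : mG ≠ 0 := by rw [hmG_def]; exact div_ne_zero (neg_ne_zero.2 hψb) hψc
  set L : F → Submodule F (Fin 3 → F) :=
    (fun m => span F {a.rep, b.rep + m • c.rep}) with hL_def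
  have hmemT : ∀ s, s ∈ T ↔ s ∈ S ∧ s ≠ a ∧ s ≠ b ∧ s ≠ c := by
    intro s
    have h' : s ∈ T ↔ s ∈ (↑T : Set (Pt F)) := by simp
    rw [h', hT]
    simp only [Set.mem_diff, Set.mem_insert_iff, Set.mem_singleton_iff]
    tauto
  -- nonvanishing of coordinates on T
  have hr1 : ∀ s ∈ T, B.repr s.rep 1 ≠ 0 := by
    intro s hsT h0
    rw [hmemT] at hsT
    obtain ⟨hsS, hsa, hsb, hsc⟩ := hsT
    have hmem : s.rep ∈ span F {a.rep, c.rep} := by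
      apply Submodule.mem_span_pair.2 ⟨B.repr s.rep 0, B.repr s.rep 2, ?_⟩
      rw [← hB0, ← hB2]
      conv_rhs => rw [decomp B s.rep]
      rw [h0, zero_smul, add_zero]
    have hle : s.submodule ≤ a.submodule ⊔ c.submodule := by
      rw [point_le_iff, sup_eq_span]
      exact hmem
    exact third_not_on_line hSfin haS hcS hsS hac (fun h => hsa h.symm)
      (fun h => hsc h.symm) hbiac hle
  have hr2 : ∀ s ∈ T, B.repr s.rep 2 ≠ 0 := by
    intro s hsT h0
    rw [hmemT] at hsT
    obtain ⟨hsS, hsa, hsb, hsc⟩ := hsT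
    have hmem : s.rep ∈ span F {a.rep, b.rep} := by
      apply Submodule.mem_span_pair.2 ⟨B.repr s.rep 0, B.repr s.rep 1, ?_⟩
      rw [← hB0, ← hB1]
      conv_rhs => rw [decomp B s.rep]
      rw [h0, zero_smul, add_zero]
    have hle : s.submodule ≤ a.submodule ⊔ b.submodule := by
      rw [point_le_iff, sup_eq_span]
      exact hmem
    exact third_not_on_line hSfin haS hbS hsS hab (fun h => hsa h.symm)
      (fun h => hsb h.symm) hbiab hle
  -- characterization of fibers
  have hmem_iff : ∀ m : F, ∀ s ∈ T,
      (B.repr s.rep 2 / B.repr s.rep 1 = m ↔ s.submodule ≤ L m) := by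
    intro m s hsT
    have hr1s := hr1 s hsT
    constructor
    · intro hρ
      rw [div_eq_iff hr1s] at hρ
      rw [point_le_iff, hL_def]
      apply Submodule.mem_span_pair.2 ⟨B.repr s.rep 0, B.repr s.rep 1, ?_⟩
      rw [← hB0, ← hB1, ← hB2]
      conv_rhs => rw [decomp B s.rep]
      rw [hρ]; module
    · intro hle
      rw [point_le_iff, hL_def] at hle
      rcases Submodule.mem_span_pair.1 hle with ⟨α, t, hst⟩
      have hst' : s.rep = α • B 0 + t • B 1 + (t * m) • B 2 := by
        have hcomb : α • B 0 + t • B 1 + (t * m) • B 2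
            = α • a.rep + t • (b.rep + m • c.rep) := by
          rw [hB0, hB1, hB2]; module
        rw [hcomb, hst]
      obtain ⟨e0, e1, e2⟩ := repr_eq_of_combo B α t (t * m) s.rep hst'
      have ht : t ≠ 0 := fun h => hr1s (by rw [e1, h])
      rw [e1, e2, mul_comm t m, mul_div_assoc, div_self ht, mul_one]
  -- b and c are not on L m for m ≠ 0
  have hbL : ∀ m : F, m ≠ 0 → ¬ b.submodule ≤ L m := by
    intro m hm hle
    rw [point_le_iff, hL_def] at hle
    rcases Submodule.mem_span_pair.1 hle with ⟨α, t, hst⟩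
    have hst' : b.rep = α • B 0 + t • B 1 + (t * m) • B 2 := by
      have hcomb : α • B 0 + t • B 1 + (t * m) • B 2
          = α • a.rep + t • (b.rep + m • c.rep) := by
        rw [hB0, hB1, hB2]; module
      rw [hcomb, hst]
    obtain ⟨e0, e1, e2⟩ := repr_eq_of_combo B α t (t * m) b.rep hst'
    have hb' : b.rep = (0 : F) • B 0 + (1 : F) • B 1 + (0 : F) • B 2 := by
      rw [hB1]; simp
    obtain ⟨f0, f1, f2⟩ := repr_eq_of_combo B 0 1 0 b.rep hb'
    have ht : t = 1 := e1.symm.trans f1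
    have htm : t * m = 0 := e2.symm.trans f2
    rw [ht, one_mul] at htm
    exact hm htm
  have hcL : ∀ m : F, m ≠ 0 → ¬ c.submodule ≤ L m := by
    intro m hm hle
    rw [point_le_iff, hL_def] at hle
    rcases Submodule.mem_span_pair.1 hle with ⟨α, t, hst⟩
    have hst' : c.rep = α • B 0 + t • B 1 + (t * m) • B 2 := by
      have hcomb : α • B 0 + t • B 1 + (t * m) • B 2
          = α • a.rep + t • (b.rep + m • c.rep) := by
        rw [hB0, hB1, hB2]; module
      rw [hcomb, hst]
    obtain ⟨e0, e1, e2⟩ := repr_eq_of_combo B α t (t * m) c.rep hst'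
    have hc' : c.rep = (0 : F) • B 0 + (0 : F) • B 1 + (1 : F) • B 2 := by
      rw [hB2]; simp
    obtain ⟨f0, f1, f2⟩ := repr_eq_of_combo B 0 0 1 c.rep hc'
    have ht : t = 0 := e1.symm.trans f1
    have htm : t * m = 1 := e2.symm.trans f2
    rw [ht, zero_mul] at htm
    exact one_ne_zero htm.symm
  have haL : ∀ m : F, a.submodule ≤ L m := by
    intro m
    rw [point_le_iff, hL_def]
    exact Submodule.subset_span (Set.mem_insert _ _)
  have hLine : ∀ m : F, IsLine F (L m) := by
    intro m
    rw [hL_def]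
    apply finrank_span_pair_two
    rw [LinearIndependent.pair_iff]
    intro s t hst
    have hst' : (0 : Fin 3 → F) = s • B 0 + t • B 1 + (t * m) • B 2 := by
      have hcomb : s • B 0 + t • B 1 + (t * m) • B 2
          = s • a.rep + t • (b.rep + m • c.rep) := by
        rw [hB0, hB1, hB2]; module
      rw [hcomb, hst]
    obtain ⟨e0, e1, e2⟩ := repr_eq_of_combo B s t (t * m) 0 hst'
    simp only [map_zero, Finsupp.coe_zero, Pi.zero_apply] at e0 e1 e2
    exact ⟨e0.symm, e1.symm⟩
  -- L mT is the tangent, L mG the trisecant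
  have hLT : L mT = LinearMap.ker φ := by
    apply line_eq_of_le (hLine mT) (finrank_ker_eq_two hφ0)
    rw [hL_def]
    apply Submodule.span_le.2
    intro v hv
    rcases hv with rfl | hv
    · exact (point_le_iff a _).1 haφ
    · rw [Set.mem_singleton_iff] at hv
      subst hv
      simp only [SetLike.mem_coe, LinearMap.mem_ker, map_add, map_smul, smul_eq_mul]
      rw [hmT_def]
      field_simp
      ring
  have hLG : L mG = LinearMap.ker ψ := by
    apply line_eq_of_le (hLine mG) (finrank_ker_eq_two hψ0)
    rw [hL_def]
    apply Submodule.span_le.2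
    intro v hv
    rcases hv with rfl | hv
    · exact (point_le_iff a _).1 haψ
    · rw [Set.mem_singleton_iff] at hv
      subst hv
      simp only [SetLike.mem_coe, LinearMap.mem_ker, map_add, map_smul, smul_eq_mul]
      rw [hmG_def]
      field_simp
      ring
  have hmTG : mT ≠ mG := by
    intro h
    have hk : LinearMap.ker φ = LinearMap.ker ψ := by rw [← hLT, h, hLG]
    rw [hk, hψ3] at hφ1
    omega
  -- secant counts of the pencil lines
  have hcnt : ∀ m : F, m ≠ 0 → m ≠ mT → m ≠ mG → secantCount F S (L m) = 2 := by
    intro m hm hmt hmg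
    apply line_through_classify S hSfin hS a haS h1 h3 h2 (LinearMap.ker φ)
      (LinearMap.ker ψ) (L m) ⟨finrank_ker_eq_two hφ0, haφ, hφ1⟩
      ⟨finrank_ker_eq_two hψ0, haψ, hψ3⟩ (hLine m) (haL m)
    · intro h
      apply hmt
      have hv : b.rep + m • c.rep ∈ LinearMap.ker φ := by
        rw [← h, hL_def]
        exact Submodule.subset_span (Set.mem_insert_of_mem _ rfl)
      rw [LinearMap.mem_ker, map_add, map_smul, smul_eq_mul] at hv
      rw [hmT_def, eq_div_iff hφc]
      linear_combination hv
    · intro h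
      apply hmg
      have hv : b.rep + m • c.rep ∈ LinearMap.ker ψ := by
        rw [← h, hL_def]
        exact Submodule.subset_span (Set.mem_insert_of_mem _ rfl)
      rw [LinearMap.mem_ker, map_add, map_smul, smul_eq_mul] at hv
      rw [hmG_def, eq_div_iff hψc]
      linear_combination hv
  -- fiber cardinalities
  have hfibcard : ∀ m : F, m ≠ 0 →
      (T.filter (fun s => B.repr s.rep 2 / B.repr s.rep 1 = m)).card
        = secantCount F S (L m) - 1 := by
    intro m hm
    have hset : ↑(T.filter (fun s => B.repr s.rep 2 / B.repr s.rep 1 = m))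
        = {p ∈ S | p.submodule ≤ L m} \ {a} := by
      ext p
      simp only [Finset.coe_filter, Set.mem_setOf_eq, Set.mem_diff,
        Set.mem_singleton_iff]
      constructor
      · rintro ⟨hpT, hρ⟩
        have h' := (hmem_iff m p hpT).1 hρ
        rw [hmemT] at hpT
        exact ⟨⟨hpT.1, h'⟩, hpT.2.1⟩
      · rintro ⟨⟨hpS, hple⟩, hpa⟩
        have hpb : p ≠ b := by
          rintro rfl
          exact hbL m hm hple
        have hpc : p ≠ c := by
          rintro rfl
          exact hcL m hm hple
        have hpT : p ∈ T := (hmemT p).2 ⟨hpS, hpa, hpb, hpc⟩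
        exact ⟨hpT, (hmem_iff m p hpT).2 hple⟩
    have hcard : (T.filter (fun s => B.repr s.rep 2 / B.repr s.rep 1 = m)).card
        = ({p ∈ S | p.submodule ≤ L m} \ {a}).ncard := by
      rw [← hset, Set.ncard_coe_finset]
    rw [hcard, Set.ncard_diff_singleton_of_mem (Set.mem_sep haS (haL m))]
    rfl
  -- the product over fibers
  set M : Finset F := Finset.univ.erase (0 : F) with hM_def
  have hmaps : ∀ s ∈ T, B.repr s.rep 2 / B.repr s.rep 1 ∈ M := by
    intro s hs
    exact Finset.mem_erase.2 ⟨div_ne_zero (hr2 s hs) (hr1 s hs), Finset.mem_univ _⟩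
  have hprod : ∏ s ∈ T, (B.repr s.rep 2 / B.repr s.rep 1)
      = ∏ m ∈ M, m ^ (secantCount F S (L m) - 1) := by
    rw [← Finset.prod_fiberwise_of_maps_to hmaps
      (fun s => B.repr s.rep 2 / B.repr s.rep 1)]
    apply Finset.prod_congr rfl
    intro m hm
    have hm0 : m ≠ 0 := (Finset.mem_erase.1 hm).1
    have hcc : ∀ s ∈ T.filter (fun s => B.repr s.rep 2 / B.repr s.rep 1 = m),
        B.repr s.rep 2 / B.repr s.rep 1 = m := fun s hs => (Finset.mem_filter.1 hs).2
    rw [Finset.prod_congr rfl hcc, Finset.prod_const, hfibcard m hm0]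
  rw [hprod]
  -- evaluate the product over M
  have hmTM : mT ∈ M := Finset.mem_erase.2 ⟨hmT0, Finset.mem_univ _⟩
  have hmGM : mG ∈ M.erase mT :=
    Finset.mem_erase.2 ⟨fun h => hmTG h.symm, Finset.mem_erase.2 ⟨hmG0, Finset.mem_univ _⟩⟩
  have hcntT : secantCount F S (L mT) - 1 = 0 := by rw [hLT, hφ1]
  have hcntG : secantCount F S (L mG) - 1 = 2 := by rw [hLG, hψ3]
  have hsplit : ∏ m ∈ M, m ^ (secantCount F S (L m) - 1)
      = mG ^ 2 * ∏ m ∈ (M.erase mT).erase mG, m := by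
    rw [← Finset.mul_prod_erase M _ hmTM, ← Finset.mul_prod_erase (M.erase mT) _ hmGM]
    rw [hcntT, hcntG, pow_zero, one_mul]
    congr 1
    apply Finset.prod_congr rfl
    intro m hm
    have hm1 := Finset.mem_erase.1 hm
    have hm2 := Finset.mem_erase.1 hm1.2
    have hm3 := Finset.mem_erase.1 hm2.2
    rw [hcnt m hm3.1 hm2.1 hm1.1, pow_one]
  have hwilson : ∏ m ∈ M, m = -1 := prod_nonzero_eq_neg_one
  have hwsplit : mT * (mG * ∏ m ∈ (M.erase mT).erase mG, m) = -1 := by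
    rw [← Finset.mul_prod_erase M (fun m => m) hmTM,
      ← Finset.mul_prod_erase (M.erase mT) (fun m => m) hmGM] at hwilson
    exact hwilson
  rw [hsplit]
  have hM'val : ∏ m ∈ (M.erase mT).erase mG, m = -1 / (mT * mG) := by
    rw [eq_div_iff (mul_ne_zero hmT0 hmG0)]
    linear_combination hwsplit
  rw [hM'val, hmT_def, hmG_def]
  field_simp
lemma coord0_ne_zero (B : Basis (Fin 3) F (Fin 3 → F)) {s q r : Pt F}
    (hB1 : B 1 = q.rep) (hB2 : B 2 = r.rep)
    (hns : ¬ s.submodule ≤ q.submodule ⊔ r.submodule) : B.repr s.rep 0 ≠ 0 := by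
  intro h0
  apply hns
  rw [point_le_iff, sup_eq_span]
  apply Submodule.mem_span_pair.2 ⟨B.repr s.rep 1, B.repr s.rep 2, ?_⟩
  rw [← hB1, ← hB2]
  conv_rhs => rw [decomp B s.rep]
  rw [h0, zero_smul, zero_add]

lemma coord1_ne_zero (B : Basis (Fin 3) F (Fin 3 → F)) {s q r : Pt F}
    (hB0 : B 0 = q.rep) (hB2 : B 2 = r.rep)
    (hns : ¬ s.submodule ≤ q.submodule ⊔ r.submodule) : B.repr s.rep 1 ≠ 0 := by
  intro h0
  apply hns
  rw [point_le_iff, sup_eq_span]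
  apply Submodule.mem_span_pair.2 ⟨B.repr s.rep 0, B.repr s.rep 2, ?_⟩
  rw [← hB0, ← hB2]
  conv_rhs => rw [decomp B s.rep]
  rw [h0, zero_smul, add_zero]

lemma coord2_ne_zero (B : Basis (Fin 3) F (Fin 3 → F)) {s q r : Pt F}
    (hB0 : B 0 = q.rep) (hB1 : B 1 = r.rep)
    (hns : ¬ s.submodule ≤ q.submodule ⊔ r.submodule) : B.repr s.rep 2 ≠ 0 := by
  intro h0
  apply hns
  rw [point_le_iff, sup_eq_span]
  apply Submodule.mem_span_pair.2 ⟨B.repr s.rep 0, B.repr s.rep 1, ?_⟩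
  rw [← hB0, ← hB1]
  conv_rhs => rw [decomp B s.rep]
  rw [h0, zero_smul, add_zero]

set_option maxHeartbeats 1000000 in
lemma triangle_rel
    (S : Set (Pt F)) (hSfin : S.Finite) (hS : S.ncard = Fintype.card F + 2)
    (S' : Set (Pt F)) (hS' : S' ⊆ S43 F S)
    (f g : Pt F → ((Fin 3 → F) →ₗ[F] F))
    (hf : ∀ x ∈ S', f x ≠ 0 ∧ x.submodule ≤ LinearMap.ker (f x) ∧
      secantCount F S (LinearMap.ker (f x)) = 1)
    (hg : ∀ x ∈ S', g x ≠ 0 ∧ x.submodule ≤ LinearMap.ker (g x) ∧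
      secantCount F S (LinearMap.ker (g x)) = 3)
    (hbi : ∀ x ∈ S', ∀ y ∈ S', x ≠ y →
      secantCount F S (x.submodule ⊔ y.submodule) = 2)
    (p₁ p₂ p₃ : Pt F) (hm1 : p₁ ∈ S') (hm2 : p₂ ∈ S') (hm3 : p₃ ∈ S')
    (h12 : p₁ ≠ p₂) (h13 : p₁ ≠ p₃) (h23 : p₂ ≠ p₃) :
    g p₁ p₂.rep * f p₁ p₃.rep * (g p₂ p₃.rep * f p₂ p₁.rep) * (g p₃ p₁.rep * f p₃ p₂.rep)
      = - (g p₁ p₃.rep * f p₁ p₂.rep * (g p₂ p₁.rep * f p₂ p₃.rep)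
          * (g p₃ p₂.rep * f p₃ p₁.rep)) := by
  classical
  obtain ⟨hS1, hc1_1, hc1_3, hc1_2⟩ := Set.mem_sep_iff.1 (hS' hm1)
  obtain ⟨hS2, hc2_1, hc2_3, hc2_2⟩ := Set.mem_sep_iff.1 (hS' hm2)
  obtain ⟨hS3, hc3_1, hc3_3, hc3_2⟩ := Set.mem_sep_iff.1 (hS' hm3)
  obtain ⟨hf1, hf1k, hf1c⟩ := hf p₁ hm1
  obtain ⟨hf2, hf2k, hf2c⟩ := hf p₂ hm2
  obtain ⟨hf3, hf3k, hf3c⟩ := hf p₃ hm3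
  obtain ⟨hg1, hg1k, hg1c⟩ := hg p₁ hm1
  obtain ⟨hg2, hg2k, hg2c⟩ := hg p₂ hm2
  obtain ⟨hg3, hg3k, hg3c⟩ := hg p₃ hm3
  have hbi12 := hbi p₁ hm1 p₂ hm2 h12
  have hbi13 := hbi p₁ hm1 p₃ hm3 h13
  have hbi23 := hbi p₂ hm2 p₃ hm3 h23
  have hbi21 : secantCount F S (p₂.submodule ⊔ p₁.submodule) = 2 := by
    rw [sup_comm]; exact hbi12
  have hbi31 : secantCount F S (p₃.submodule ⊔ p₁.submodule) = 2 := by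
    rw [sup_comm]; exact hbi13
  have hbi32 : secantCount F S (p₃.submodule ⊔ p₂.submodule) = 2 := by
    rw [sup_comm]; exact hbi23
  -- non-collinearity
  have hnc3 : ¬ p₃.submodule ≤ p₁.submodule ⊔ p₂.submodule :=
    third_not_on_line hSfin hS1 hS2 hS3 h12 h13 h23 hbi12
  have hnc1 : ¬ p₁.submodule ≤ p₂.submodule ⊔ p₃.submodule :=
    third_not_on_line hSfin hS2 hS3 hS1 h23 (fun h => h12 h.symm) (fun h => h13 h.symm) hbi23
  have hnc2 : ¬ p₂.submodule ≤ p₃.submodule ⊔ p₁.submodule :=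
    third_not_on_line hSfin hS3 hS1 hS2 (fun h => h13 h.symm) (fun h => h23 h.symm) h12 hbi31
  -- the three bases
  have hcard : Fintype.card (Fin 3) = finrank F (Fin 3 → F) := by simp
  have li1 : LinearIndependent F ![p₁.rep, p₂.rep, p₃.rep] := rep_li_triple hnc3 h12
  have li2 : LinearIndependent F ![p₂.rep, p₃.rep, p₁.rep] := rep_li_triple hnc1 h23
  have li3 : LinearIndependent F ![p₃.rep, p₁.rep, p₂.rep] :=
    rep_li_triple hnc2 (fun h => h13 h.symm)
  obtain ⟨B₁, hco1⟩ : ∃ B : Basis (Fin 3) F (Fin 3 → F),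
      ⇑B = ![p₁.rep, p₂.rep, p₃.rep] :=
    ⟨basisOfLinearIndependentOfCardEqFinrank li1 hcard,
      coe_basisOfLinearIndependentOfCardEqFinrank li1 hcard⟩
  obtain ⟨B₂, hco2⟩ : ∃ B : Basis (Fin 3) F (Fin 3 → F),
      ⇑B = ![p₂.rep, p₃.rep, p₁.rep] :=
    ⟨basisOfLinearIndependentOfCardEqFinrank li2 hcard,
      coe_basisOfLinearIndependentOfCardEqFinrank li2 hcard⟩
  obtain ⟨B₃, hco3⟩ : ∃ B : Basis (Fin 3) F (Fin 3 → F),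
      ⇑B = ![p₃.rep, p₁.rep, p₂.rep] :=
    ⟨basisOfLinearIndependentOfCardEqFinrank li3 hcard,
      coe_basisOfLinearIndependentOfCardEqFinrank li3 hcard⟩
  have hB10 : B₁ 0 = p₁.rep := by rw [hco1]; rfl
  have hB11 : B₁ 1 = p₂.rep := by rw [hco1]; rfl
  have hB12 : B₁ 2 = p₃.rep := by rw [hco1]; rfl
  have hB20 : B₂ 0 = p₂.rep := by rw [hco2]; rfl
  have hB21 : B₂ 1 = p₃.rep := by rw [hco2]; rfl
  have hB22 : B₂ 2 = p₁.rep := by rw [hco2]; rfl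
  have hB30 : B₃ 0 = p₃.rep := by rw [hco3]; rfl
  have hB31 : B₃ 1 = p₁.rep := by rw [hco3]; rfl
  have hB32 : B₃ 2 = p₂.rep := by rw [hco3]; rfl
  -- the common finset T
  set T : Finset (Pt F) := (hSfin.diff (t := ({p₁, p₂, p₃} : Set (Pt F)))).toFinset with hT_def
  have hT1 : ↑T = S \ ({p₁, p₂, p₃} : Set (Pt F)) := Set.Finite.coe_toFinset _
  have hT2 : ↑T = S \ ({p₂, p₃, p₁} : Set (Pt F)) := by
    rw [hT1]
    congr 1
    ext w; simp only [Set.mem_insert_iff, Set.mem_singleton_iff]; tauto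
  have hT3 : ↑T = S \ ({p₃, p₁, p₂} : Set (Pt F)) := by
    rw [hT1]
    congr 1
    ext w; simp only [Set.mem_insert_iff, Set.mem_singleton_iff]; tauto
  -- the three pencil products
  have P1 := pencil_prod S hSfin hS p₁ p₂ p₃ hS1 hS2 hS3 h12 h13 h23
    hc1_1 hc1_3 hc1_2 (f p₁) (g p₁) hf1 hf1k hf1c hg1 hg1k hg1c hbi12 hbi13
    B₁ hB10 hB11 hB12 T hT1
  have P2 := pencil_prod S hSfin hS p₂ p₃ p₁ hS2 hS3 hS1 h23
    (fun h => h12 h.symm) (fun h => h13 h.symm)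
    hc2_1 hc2_3 hc2_2 (f p₂) (g p₂) hf2 hf2k hf2c hg2 hg2k hg2c hbi23 hbi21
    B₂ hB20 hB21 hB22 T hT2
  have P3 := pencil_prod S hSfin hS p₃ p₁ p₂ hS3 hS1 hS2
    (fun h => h13 h.symm) (fun h => h23 h.symm) h12
    hc3_1 hc3_3 hc3_2 (f p₃) (g p₃) hf3 hf3k hf3c hg3 hg3k hg3c hbi31 hbi32
    B₃ hB30 hB31 hB32 T hT3
  -- membership facts about T
  have hmemT : ∀ s, s ∈ T → s ∈ S ∧ s ≠ p₁ ∧ s ≠ p₂ ∧ s ≠ p₃ := by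
    intro s hs
    have h' : s ∈ (↑T : Set (Pt F)) := hs
    rw [hT1] at h'
    obtain ⟨hsS, hsn⟩ := h'
    simp only [Set.mem_insert_iff, Set.mem_singleton_iff] at hsn
    push_neg at hsn
    exact ⟨hsS, hsn⟩
  -- the product of the three ratios is 1
  have hone : (∏ s ∈ T, (B₁.repr s.rep 2 / B₁.repr s.rep 1))
      * (∏ s ∈ T, (B₂.repr s.rep 2 / B₂.repr s.rep 1))
      * (∏ s ∈ T, (B₃.repr s.rep 2 / B₃.repr s.rep 1)) = 1 := by
    rw [← Finset.prod_mul_distrib, ← Finset.prod_mul_distrib]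
    apply Finset.prod_eq_one
    intro s hs
    obtain ⟨hsS, hs1, hs2, hs3⟩ := hmemT s hs
    have hns12 : ¬ s.submodule ≤ p₁.submodule ⊔ p₂.submodule :=
      third_not_on_line hSfin hS1 hS2 hsS h12 (fun h => hs1 h.symm)
        (fun h => hs2 h.symm) hbi12
    have hns13 : ¬ s.submodule ≤ p₁.submodule ⊔ p₃.submodule :=
      third_not_on_line hSfin hS1 hS3 hsS h13 (fun h => hs1 h.symm)
        (fun h => hs3 h.symm) hbi13
    have hns23 : ¬ s.submodule ≤ p₂.submodule ⊔ p₃.submodule :=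
      third_not_on_line hSfin hS2 hS3 hsS h23 (fun h => hs2 h.symm)
        (fun h => hs3 h.symm) hbi23
    have hr0 : B₁.repr s.rep 0 ≠ 0 := coord0_ne_zero B₁ hB11 hB12 hns23
    have hr1 : B₁.repr s.rep 1 ≠ 0 := coord1_ne_zero B₁ hB10 hB12 hns13
    have hr2 : B₁.repr s.rep 2 ≠ 0 := coord2_ne_zero B₁ hB10 hB11 hns12
    -- coordinates w.r.t. B₂ and B₃ in terms of B₁
    have hd2 : s.rep = B₁.repr s.rep 1 • B₂ 0 + B₁.repr s.rep 2 • B₂ 1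
        + B₁.repr s.rep 0 • B₂ 2 := by
      have hcomb : B₁.repr s.rep 1 • B₂ 0 + B₁.repr s.rep 2 • B₂ 1
          + B₁.repr s.rep 0 • B₂ 2
          = B₁.repr s.rep 0 • B₁ 0 + B₁.repr s.rep 1 • B₁ 1 + B₁.repr s.rep 2 • B₁ 2 := by
        rw [hB20, hB21, hB22, hB10, hB11, hB12]; module
      rw [hcomb, ← decomp]
    have hd3 : s.rep = B₁.repr s.rep 2 • B₃ 0 + B₁.repr s.rep 0 • B₃ 1
        + B₁.repr s.rep 1 • B₃ 2 := by
      have hcomb : B₁.repr s.rep 2 • B₃ 0 + B₁.repr s.rep 0 • B₃ 1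
          + B₁.repr s.rep 1 • B₃ 2
          = B₁.repr s.rep 0 • B₁ 0 + B₁.repr s.rep 1 • B₁ 1 + B₁.repr s.rep 2 • B₁ 2 := by
        rw [hB30, hB31, hB32, hB10, hB11, hB12]; module
      rw [hcomb, ← decomp]
    obtain ⟨e20, e21, e22⟩ := repr_eq_of_combo B₂ _ _ _ s.rep hd2
    obtain ⟨e30, e31, e32⟩ := repr_eq_of_combo B₃ _ _ _ s.rep hd3
    rw [e21, e22, e31, e32]
    field_simp
  rw [P1, P2, P3] at hone
  -- nonvanishing of all the evaluations
  have hfe12 : f p₁ p₂.rep ≠ 0 := eval_ne_zero hf1 hf1k hf1c hbi12 h12 (by norm_num)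
  have hfe13 : f p₁ p₃.rep ≠ 0 := eval_ne_zero hf1 hf1k hf1c hbi13 h13 (by norm_num)
  have hfe21 : f p₂ p₁.rep ≠ 0 := eval_ne_zero hf2 hf2k hf2c hbi21 (fun h => h12 h.symm) (by norm_num)
  have hfe23 : f p₂ p₃.rep ≠ 0 := eval_ne_zero hf2 hf2k hf2c hbi23 h23 (by norm_num)
  have hfe31 : f p₃ p₁.rep ≠ 0 := eval_ne_zero hf3 hf3k hf3c hbi31 (fun h => h13 h.symm) (by norm_num)
  have hfe32 : f p₃ p₂.rep ≠ 0 := eval_ne_zero hf3 hf3k hf3c hbi32 (fun h => h23 h.symm) (by norm_num)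
  have hge12 : g p₁ p₂.rep ≠ 0 := eval_ne_zero hg1 hg1k hg1c hbi12 h12 (by norm_num)
  have hge13 : g p₁ p₃.rep ≠ 0 := eval_ne_zero hg1 hg1k hg1c hbi13 h13 (by norm_num)
  have hge21 : g p₂ p₁.rep ≠ 0 := eval_ne_zero hg2 hg2k hg2c hbi21 (fun h => h12 h.symm) (by norm_num)
  have hge23 : g p₂ p₃.rep ≠ 0 := eval_ne_zero hg2 hg2k hg2c hbi23 h23 (by norm_num)
  have hge31 : g p₃ p₁.rep ≠ 0 := eval_ne_zero hg3 hg3k hg3c hbi31 (fun h => h13 h.symm) (by norm_num)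
  have hge32 : g p₃ p₂.rep ≠ 0 := eval_ne_zero hg3 hg3k hg3c hbi32 (fun h => h23 h.symm) (by norm_num)
  field_simp at hone
  linear_combination -hone
lemma pair_rel
    (S : Set (Pt F)) (hSfin : S.Finite) (hS : S.ncard = Fintype.card F + 2)
    (S' : Set (Pt F)) (hS' : S' ⊆ S43 F S)
    (f g : Pt F → ((Fin 3 → F) →ₗ[F] F))
    (hf : ∀ x ∈ S', f x ≠ 0 ∧ x.submodule ≤ LinearMap.ker (f x) ∧
      secantCount F S (LinearMap.ker (f x)) = 1)
    (hg : ∀ x ∈ S', g x ≠ 0 ∧ x.submodule ≤ LinearMap.ker (g x) ∧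
      secantCount F S (LinearMap.ker (g x)) = 3)
    (hbi : ∀ x ∈ S', ∀ y ∈ S', x ≠ y →
      secantCount F S (x.submodule ⊔ y.submodule) = 2)
    (e : Pt F) (he : e ∈ S')
    (hscale : ∀ x ∈ S', f x e.rep = f e x.rep ∧ g x e.rep = g e x.rep)
    (u v : Pt F) (hu : u ∈ S') (hv : v ∈ S') (hue : u ≠ e) (hve : v ≠ e)
    (huv : u ≠ v) :
    g u v.rep * f v u.rep = - (f u v.rep * g v u.rep) := by
  have T := triangle_rel S hSfin hS S' hS' f g hf hg hbi u v e hu hv he huv hue hve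
  obtain ⟨hsu_f, hsu_g⟩ := hscale u hu
  obtain ⟨hsv_f, hsv_g⟩ := hscale v hv
  rw [hsu_f, hsu_g, hsv_f, hsv_g] at T
  obtain ⟨hfe0, hfek, hfec⟩ := hf e he
  obtain ⟨hge0, hgek, hgec⟩ := hg e he
  have hbieu : secantCount F S (e.submodule ⊔ u.submodule) = 2 :=
    hbi e he u hu (fun h => hue h.symm)
  have hbiev : secantCount F S (e.submodule ⊔ v.submodule) = 2 :=
    hbi e he v hv (fun h => hve h.symm)
  have h1 : f e u.rep ≠ 0 :=
    eval_ne_zero hfe0 hfek hfec hbieu (fun h => hue h.symm) (by norm_num)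
  have h2 : g e u.rep ≠ 0 :=
    eval_ne_zero hge0 hgek hgec hbieu (fun h => hue h.symm) (by norm_num)
  have h3 : f e v.rep ≠ 0 :=
    eval_ne_zero hfe0 hfek hfec hbiev (fun h => hve h.symm) (by norm_num)
  have h4 : g e v.rep ≠ 0 :=
    eval_ne_zero hge0 hgek hgec hbiev (fun h => hve h.symm) (by norm_num)
  have hK : f e u.rep * g e u.rep * f e v.rep * g e v.rep ≠ 0 :=
    mul_ne_zero (mul_ne_zero (mul_ne_zero h1 h2) h3) h4
  apply mul_right_cancel₀ hK
  linear_combination T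


/-- For all pairwise distinct `x, y, z ∈ S' \ {e}`, `b_{xy}(z) ≠ 0`. -/
theorem b_ne_zero
    (F : Type) [Field F] [Fintype F] (hq : Odd (Fintype.card F))
    (S : Set (Pt F)) (hS : S.ncard = Fintype.card F + 2)
    (S' : Set (Pt F)) (hS' : S' ⊆ S43 F S)
    (f g : Pt F → ((Fin 3 → F) →ₗ[F] F))
    (hf : ∀ x ∈ S', f x ≠ 0 ∧ x.submodule ≤ LinearMap.ker (f x) ∧
      secantCount F S (LinearMap.ker (f x)) = 1)
    (hg : ∀ x ∈ S', g x ≠ 0 ∧ x.submodule ≤ LinearMap.ker (g x) ∧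
      secantCount F S (LinearMap.ker (g x)) = 3)
    (hbi : ∀ x ∈ S', ∀ y ∈ S', x ≠ y → secantCount F S (x.submodule ⊔ y.submodule) = 2)
    (e : Pt F) (he : e ∈ S')
    (hscale : ∀ x ∈ S', f x e.rep = f e x.rep ∧ g x e.rep = g e x.rep)
    (x y z : Pt F)
    (hx : x ∈ S' \ {e}) (hy : y ∈ S' \ {e}) (hz : z ∈ S' \ {e})
    (hxy : x ≠ y) (hxz : x ≠ z) (hyz : y ≠ z) :
    f x z.rep * g y z.rep - g x z.rep * f y z.rep ≠ 0 := by
  have hSfin : S.Finite := by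
    by_contra hinf
    have h0 : S.ncard = 0 := Set.Infinite.ncard hinf
    rw [h0] at hS
    omega
  obtain ⟨hxS', hxe'⟩ := hx
  obtain ⟨hyS', hye'⟩ := hy
  obtain ⟨hzS', hze'⟩ := hz
  have hxe : x ≠ e := by simpa using hxe'
  have hye : y ≠ e := by simpa using hye'
  have hze : z ≠ e := by simpa using hze'
  have hxS : x ∈ S := (Set.mem_sep_iff.1 (hS' hxS')).1
  have hyS : y ∈ S := (Set.mem_sep_iff.1 (hS' hyS')).1
  have hzS : z ∈ S := (Set.mem_sep_iff.1 (hS' hzS')).1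
  intro h0
  have hw : f x z.rep * g y z.rep = g x z.rep * f y z.rep := by linear_combination h0
  have hpair := pair_rel S hSfin hS S' hS' f g hf hg hbi e he hscale
    x y hxS' hyS' hxe hye hxy
  have hT := triangle_rel S hSfin hS S' hS' f g hf hg hbi x y z hxS' hyS' hzS'
    hxy hxz hyz
  -- nonvanishing facts
  obtain ⟨hfx0, hfxk, hfxc⟩ := hf x hxS'
  obtain ⟨hfy0, hfyk, hfyc⟩ := hf y hyS'
  obtain ⟨hfz0, hfzk, hfzc⟩ := hf z hzS'
  obtain ⟨hgx0, hgxk, hgxc⟩ := hg x hxS'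
  obtain ⟨hgy0, hgyk, hgyc⟩ := hg y hyS'
  obtain ⟨hgz0, hgzk, hgzc⟩ := hg z hzS'
  have hbixy := hbi x hxS' y hyS' hxy
  have hbixz := hbi x hxS' z hzS' hxz
  have hbiyx : secantCount F S (y.submodule ⊔ x.submodule) = 2 := by
    rw [sup_comm]; exact hbixy
  have hbiyz := hbi y hyS' z hzS' hyz
  have hbizx : secantCount F S (z.submodule ⊔ x.submodule) = 2 := by
    rw [sup_comm]; exact hbixz
  have hbizy : secantCount F S (z.submodule ⊔ y.submodule) = 2 := by
    rw [sup_comm]; exact hbiyz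
  have hfxy : f x y.rep ≠ 0 := eval_ne_zero hfx0 hfxk hfxc hbixy hxy (by norm_num)
  have hgxz : g x z.rep ≠ 0 := eval_ne_zero hgx0 hgxk hgxc hbixz hxz (by norm_num)
  have hgyx : g y x.rep ≠ 0 :=
    eval_ne_zero hgy0 hgyk hgyc hbiyx (fun h => hxy h.symm) (by norm_num)
  have hfyz : f y z.rep ≠ 0 := eval_ne_zero hfy0 hfyk hfyc hbiyz hyz (by norm_num)
  have hfzx : f z x.rep ≠ 0 :=
    eval_ne_zero hfz0 hfzk hfzc hbizx (fun h => hxz h.symm) (by norm_num)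
  have hfzy : f z y.rep ≠ 0 :=
    eval_ne_zero hfz0 hfzk hfzc hbizy (fun h => hyz h.symm) (by norm_num)
  -- the key cancellation
  have hA'ne : g x z.rep * f x y.rep * g y x.rep * f y z.rep ≠ 0 :=
    mul_ne_zero (mul_ne_zero (mul_ne_zero hgxz hfxy) hgyx) hfyz
  have hbig : (g x z.rep * f x y.rep * g y x.rep * f y z.rep) * (g z x.rep * f z y.rep)
      = (g x z.rep * f x y.rep * g y x.rep * f y z.rep) * (g z y.rep * f z x.rep) := by
    linear_combination (g z x.rep * f z y.rep) * (g x z.rep * f y z.rep) * hpair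
      + (g z x.rep * f z y.rep) * (g x y.rep * f y x.rep) * hw - hT
  have hE : g z x.rep * f z y.rep = g z y.rep * f z x.rep :=
    mul_left_cancel₀ hA'ne hbig
  -- the vector witnessing collinearity
  set v : Fin 3 → F := f z y.rep • x.rep - f z x.rep • y.rep with hv_def
  have hvf : f z v = 0 := by
    rw [hv_def]
    simp only [map_sub, map_smul, smul_eq_mul]
    ring
  have hvg : g z v = 0 := by
    rw [hv_def]
    simp only [map_sub, map_smul, smul_eq_mul]
    linear_combination hE
  -- ker f z ⊓ ker g z = z.submodule
  have hker_ne : LinearMap.ker (f z) ≠ LinearMap.ker (g z) := by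
    intro h
    rw [h, hgzc] at hfzc
    omega
  have hrk_f : finrank F ↥(LinearMap.ker (f z)) = 2 := finrank_ker_eq_two hfz0
  have hrk_g : finrank F ↥(LinearMap.ker (g z)) = 2 := finrank_ker_eq_two hgz0
  have hsup_ne_f : LinearMap.ker (f z) ⊔ LinearMap.ker (g z) ≠ LinearMap.ker (f z) := by
    intro h
    apply hker_ne
    have hle : LinearMap.ker (g z) ≤ LinearMap.ker (f z) := by
      rw [← h]; exact le_sup_right
    exact (Submodule.eq_of_le_of_finrank_le hle (by rw [hrk_f, hrk_g])).symm
  have hrk_sup : finrank F ↥(LinearMap.ker (f z) ⊔ LinearMap.ker (g z)) = 3 := by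
    have hle3 : finrank F ↥(LinearMap.ker (f z) ⊔ LinearMap.ker (g z)) ≤ 3 := by
      have h' := Submodule.finrank_le (LinearMap.ker (f z) ⊔ LinearMap.ker (g z))
      simpa using h'
    rcases lt_or_ge (finrank F ↥(LinearMap.ker (f z) ⊔ LinearMap.ker (g z))) 3 with hlt | hge
    · exfalso
      apply hsup_ne_f
      exact (Submodule.eq_of_le_of_finrank_le le_sup_left (by omega)).symm
    · omega
  have hrk_inf : finrank F ↥(LinearMap.ker (f z) ⊓ LinearMap.ker (g z)) = 1 := by
    have hgr := Submodule.finrank_sup_add_finrank_inf_eq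
      (LinearMap.ker (f z)) (LinearMap.ker (g z))
    rw [hrk_sup, hrk_f, hrk_g] at hgr
    omega
  have hz_inf : z.submodule = LinearMap.ker (f z) ⊓ LinearMap.ker (g z) :=
    Submodule.eq_of_le_of_finrank_le (le_inf hfzk hgzk)
      (by rw [hrk_inf, Projectivization.finrank_submodule])
  have hvz : v ∈ z.submodule := by
    rw [hz_inf]
    exact Submodule.mem_inf.2 ⟨LinearMap.mem_ker.2 hvf, LinearMap.mem_ker.2 hvg⟩
  rw [Projectivization.submodule_eq] at hvz
  obtain ⟨t, ht⟩ := Submodule.mem_span_singleton.1 hvz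
  have hli := rep_li_pair hxy
  rcases eq_or_ne t 0 with ht0 | ht0
  · -- v = 0 would make x and y equal
    rw [ht0, zero_smul] at ht
    have hcombo : f z y.rep • x.rep + (-(f z x.rep)) • y.rep = 0 := by
      rw [neg_smul, ← sub_eq_add_neg, ← hv_def, ← ht]
    obtain ⟨hz1, hz2⟩ := LinearIndependent.pair_iff.1 hli _ _ hcombo
    exact hfzy hz1
  · -- z lies on the line through x and y
    have hzrep : z.rep = t⁻¹ • v := by
      rw [← ht, smul_smul, inv_mul_cancel₀ ht0, one_smul]
    have hmem : z.rep ∈ span F {x.rep, y.rep} := by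
      apply Submodule.mem_span_pair.2 ⟨t⁻¹ * f z y.rep, -(t⁻¹ * f z x.rep), ?_⟩
      rw [hzrep, hv_def]
      module
    have hle : z.submodule ≤ x.submodule ⊔ y.submodule := by
      rw [point_le_iff, sup_eq_span]
      exact hmem
    exact third_not_on_line hSfin hxS hyS hzS hxy hxz hyz hbixy hle
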